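/- For a nilpotent self-adjoint endomorphism A of an m-dimensional pseudo-Euclidean space V, the following are equivalent: (i) A^{m-1} ≠ 0; (ii) rank A = m - 1; (iii) ±Id are the only linear isometries of V commuting with A; (iv) A commutes with only finitely many linear isometries of V; (v) 0 is the only skew-adjoint endomorphism of V commuting with A. -/

import Mathlib

open Module



lemma iterate_indep {V : Type*} [AddCommGroup V] [Module ℝ V]
    (m : ℕ) (A : V →ₗ[ℝ] V) (hnil : A ^ m = 0) (v : V) (hv : (A ^ (m-1)) v ≠ 0) :
    LinearIndependent ℝ (fun i : Fin m => (A ^ (i:ℕ)) v) := by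
  rw [Fintype.linearIndependent_iff]
  intro g hg
  have key : ∀ n : ℕ, ∀ i : Fin m, (i:ℕ) = n → (∀ j : Fin m, (j:ℕ) < (i:ℕ) → g j = 0) → g i = 0 := by
    intro n
    intro i _ hlt
    have h1 : (A ^ (m - 1 - (i:ℕ))) (∑ j : Fin m, g j • (A ^ (j:ℕ)) v) = 0 := by
      rw [hg, map_zero]
    rw [map_sum] at h1
    have h2 : ∀ j : Fin m, (A ^ (m - 1 - (i:ℕ))) (g j • (A ^ (j:ℕ)) v)
        = if j = i then g j • (A ^ (m-1)) v else 0 := by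
      intro j
      have hcomp : (A ^ (m - 1 - (i:ℕ))) ((A ^ (j:ℕ)) v) = (A ^ (m - 1 - (i:ℕ) + (j:ℕ))) v := by
        rw [← Module.End.mul_apply, ← pow_add]
      rcases lt_trichotomy (j:ℕ) (i:ℕ) with h | h | h
      · rw [if_neg (by simp [Fin.ext_iff]; omega), hlt j h, zero_smul, map_zero]
      · have heq : j = i := Fin.ext h
        have : m - 1 - (i:ℕ) + (j:ℕ) = m - 1 := by omega
        rw [map_smul, hcomp, this, if_pos heq]
      · have hge : m ≤ m - 1 - (i:ℕ) + (j:ℕ) := by omega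
        have hz : (A ^ (m - 1 - (i:ℕ) + (j:ℕ))) = 0 := pow_eq_zero_of_le hge hnil
        rw [if_neg (by simp [Fin.ext_iff]; omega), map_smul, hcomp, hz]
        simp
    rw [Finset.sum_congr rfl (fun j _ => h2 j), Finset.sum_ite_eq' _ _ _,
      if_pos (Finset.mem_univ i)] at h1
    rcases smul_eq_zero.mp h1 with h | h
    · exact h
    · exact absurd h hv
  have main : ∀ n : ℕ, ∀ i : Fin m, (i:ℕ) ≤ n → g i = 0 := by
    intro n
    induction n with
    | zero => exact fun i hi => key (i:ℕ) i rfl (fun j hj => absurd hj (by omega))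
    | succ n ih => exact fun i hi => key (i:ℕ) i rfl (fun j hj => ih j (by omega))
  exact fun i => main (i:ℕ) i le_rfl



-- kernel not trivial
lemma ker_ne_bot {V : Type*} [AddCommGroup V] [Module ℝ V] [Nontrivial V]
    (m : ℕ) (hm : 1 ≤ m) (A : V →ₗ[ℝ] V) (hnil : A ^ m = 0) :
    ¬ Function.Injective A := by
  intro hinj
  have hpow : ∀ n, Function.Injective (A ^ n : V →ₗ[ℝ] V) := by
    intro n; induction n with
    | zero => exact fun a b h => by simpa using h
    | succ n ih =>
      rw [pow_succ]
      exact fun a b h => hinj (ih (by simpa [Module.End.mul_apply] using h))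
  obtain ⟨v, hv⟩ := exists_ne (0 : V)
  exact hv (hpow m (show (A ^ m) v = (A ^ m) 0 by simp [hnil]))

-- dim ker (A^(k+1)) ≤ dim ker (A^k) + dim ker A
lemma ker_pow_bound {V : Type*} [AddCommGroup V] [Module ℝ V] [FiniteDimensional ℝ V]
    (A : V →ₗ[ℝ] V) (k : ℕ) :
    finrank ℝ (LinearMap.ker (A ^ (k+1)) : Submodule ℝ V)
      ≤ finrank ℝ (LinearMap.ker (A ^ k) : Submodule ℝ V)
        + finrank ℝ (LinearMap.ker A : Submodule ℝ V) := by
  set K := LinearMap.ker (A ^ (k+1))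
  let f : K →ₗ[ℝ] V := A.domRestrict K
  have hrn := LinearMap.finrank_range_add_finrank_ker f
  have h1 : finrank ℝ (LinearMap.range f) ≤ finrank ℝ (LinearMap.ker (A ^ k) : Submodule ℝ V) := by
    apply Submodule.finrank_mono
    rintro _ ⟨⟨x, hx⟩, rfl⟩
    simp only [LinearMap.mem_ker, K] at hx ⊢
    simp only [LinearMap.domRestrict_apply, f]
    rw [← Module.End.mul_apply, ← pow_succ]
    exact hx
  have h2 : finrank ℝ (LinearMap.ker f : Submodule ℝ K) ≤ finrank ℝ (LinearMap.ker A : Submodule ℝ V) := by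
    let g : (LinearMap.ker f : Submodule ℝ K) →ₗ[ℝ] (LinearMap.ker A : Submodule ℝ V) :=
      LinearMap.codRestrict _ (K.subtype ∘ₗ (LinearMap.ker f).subtype)
        (by rintro ⟨⟨x, hxK⟩, hxf⟩; simpa [f] using hxf)
    have hg : Function.Injective g := by
      intro a b hab
      have := congrArg (Subtype.val) hab
      simp only [g, LinearMap.codRestrict_apply, LinearMap.comp_apply, Submodule.coe_subtype] at this
      exact Subtype.ext (Subtype.ext this)
    exact LinearMap.finrank_le_finrank_of_injective hg
  have : finrank ℝ K = finrank ℝ (LinearMap.range f) + finrank ℝ (LinearMap.ker f) := hrn.symm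
  omega

lemma ker_dim_one {V : Type*} [AddCommGroup V] [Module ℝ V] {m : ℕ} (hm : 2 ≤ m)
    (hdim : finrank ℝ V = m) (A : V →ₗ[ℝ] V) (hnil : A ^ m = 0) :
    1 ≤ finrank ℝ (LinearMap.ker A : Submodule ℝ V) := by
  haveI : FiniteDimensional ℝ V := FiniteDimensional.of_finrank_pos (by omega)
  haveI : Nontrivial V := Module.nontrivial_of_finrank_pos (R := ℝ) (by omega)
  have h := ker_ne_bot m (by omega) A hnil
  have : LinearMap.ker A ≠ ⊥ := fun hb => h (LinearMap.ker_eq_bot.mp hb)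
  exact Submodule.one_le_finrank_iff.mpr this

-- (i) → (ii)
lemma rank_of_pow {V : Type*} [AddCommGroup V] [Module ℝ V] {m : ℕ} (hm : 2 ≤ m)
    (hdim : finrank ℝ V = m) (A : V →ₗ[ℝ] V) (hnil : A ^ m = 0)
    (h1 : A ^ (m-1) ≠ 0) :
    finrank ℝ (LinearMap.range A) = m - 1 := by
  haveI : FiniteDimensional ℝ V := FiniteDimensional.of_finrank_pos (by omega)
  obtain ⟨v, hv⟩ : ∃ v, (A ^ (m-1)) v ≠ 0 := by
    by_contra h; push_neg at h
    exact h1 (LinearMap.ext fun v => by simpa using h v)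
  have hind := iterate_indep m A hnil v hv
  let e : Fin (m-1) → Fin m := fun i => ⟨(i:ℕ)+1, by omega⟩
  have he : Function.Injective e := by
    intro a b hab
    have := congrArg (Fin.val) hab
    simp only [e] at this
    exact Fin.ext (by omega)
  have hsub : LinearIndependent ℝ (fun i : Fin (m-1) => (A ^ ((i:ℕ)+1)) v) :=
    hind.comp e he
  have hspan_le : Submodule.span ℝ (Set.range fun i : Fin (m-1) => (A ^ ((i:ℕ)+1)) v)
      ≤ LinearMap.range A := by
    rw [Submodule.span_le]
    rintro _ ⟨i, rfl⟩
    exact ⟨(A ^ (i:ℕ)) v, by rw [← Module.End.mul_apply, ← pow_succ']⟩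
  have hlow : m - 1 ≤ finrank ℝ (LinearMap.range A) := by
    have := Submodule.finrank_mono hspan_le
    rwa [finrank_span_eq_card hsub, Fintype.card_fin] at this
  have hrn := LinearMap.finrank_range_add_finrank_ker A
  rw [hdim] at hrn
  have hker := ker_dim_one hm hdim A hnil
  omega

-- (ii) → (i)
lemma pow_of_rank {V : Type*} [AddCommGroup V] [Module ℝ V] {m : ℕ} (hm : 2 ≤ m)
    (hdim : finrank ℝ V = m) (A : V →ₗ[ℝ] V) (hnil : A ^ m = 0)
    (h2 : finrank ℝ (LinearMap.range A) = m - 1) :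
    A ^ (m-1) ≠ 0 := by
  haveI : FiniteDimensional ℝ V := FiniteDimensional.of_finrank_pos (by omega)
  have hrn := LinearMap.finrank_range_add_finrank_ker A
  rw [hdim, h2] at hrn
  have hker : finrank ℝ (LinearMap.ker A : Submodule ℝ V) = 1 := by omega
  intro hzero
  have hbound : ∀ k, finrank ℝ (LinearMap.ker (A ^ k) : Submodule ℝ V) ≤ k := by
    intro k; induction k with
    | zero => simp [pow_zero, Module.End.one_eq_id]
      -- ker 1 = ⊥
    | succ k ih =>
      have := ker_pow_bound A k
      omega
  have := hbound (m-1)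
  rw [hzero, LinearMap.ker_zero, finrank_top, hdim] at this
  omega


lemma expand_aux {R : Type*} [Ring R] [Algebra ℝ R] (a : ℝ) (N : R) :
    (a • 1 + N) * (a • 1 + N) = (a*a) • 1 + (2*a) • N + N*N := by
  simp only [add_mul, mul_add, smul_add, smul_mul_assoc, mul_smul_comm, one_mul, mul_one,
    smul_smul]
  rw [two_mul, add_smul]
  abel

lemma aux2 {R : Type*} [Ring R] [Algebra ℝ R] (a : ℝ) (N : R)
    (h : (a*a) • 1 + (2*a) • N + N*N = 1) :
    (a*a - 1) • (1:R) = -(N * ((2*a) • 1 + N)) := by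
  rw [add_assoc] at h
  have h2 := eq_sub_of_add_eq' h
  rw [mul_add, mul_smul_comm, mul_one, h2, sub_smul, one_smul]
  abel

lemma aux3 {R : Type*} [Ring R] [Algebra ℝ R] (a : ℝ) (N : R)
    (h : (a*a) • 1 + (2*a) • N + N*N = 1) (hsq : a*a = 1) :
    N*N = (-(2*a)) • N := by
  rw [hsq, one_smul, add_assoc] at h
  have h2 := eq_sub_of_add_eq' h
  rw [eq_sub_of_add_eq' h2, neg_smul]
  abel


lemma exists_ab {V : Type*} [AddCommGroup V] [Module ℝ V] [FiniteDimensional ℝ V]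
    (A : V →ₗ[ℝ] V) (hker : 2 ≤ finrank ℝ (LinearMap.ker A : Submodule ℝ V)) :
    ∃ a b : V, A a = 0 ∧ A b = 0 ∧
      (∀ s t : ℝ, s • a + t • b = 0 → s = 0 ∧ t = 0) := by
  set K := (LinearMap.ker A : Submodule ℝ V)
  let bK := finBasis ℝ K
  let e : Fin 2 → Fin (finrank ℝ K) := fun i => ⟨(i:ℕ), by omega⟩
  have he : Function.Injective e := by
    intro i j hij
    have h2 : (e i).val = (e j).val := congrArg Fin.val hij
    exact Fin.ext h2
  have hind : LinearIndependent ℝ (fun i : Fin 2 => ((bK (e i) : K) : V)) := by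
    have h1 : LinearIndependent ℝ (fun i : Fin (finrank ℝ K) => ((bK i : K) : V)) :=
      bK.linearIndependent.map' K.subtype K.ker_subtype
    exact h1.comp e he
  refine ⟨(bK (e 0) : K), (bK (e 1) : K), (bK (e 0)).2, (bK (e 1)).2, ?_⟩
  intro s t hst
  have := Fintype.linearIndependent_iff.mp hind ![s, t] (by
    rw [Fin.sum_univ_two]
    simpa using hst)
  exact ⟨this 0, this 1⟩

lemma build_S {V : Type*} [AddCommGroup V] [Module ℝ V] [FiniteDimensional ℝ V]
    (B : V →ₗ[ℝ] V →ₗ[ℝ] ℝ)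
    (hsymm : ∀ v w, B v w = B w v)
    (hnd : ∀ v, (∀ w, B v w = 0) → v = 0)
    (A : V →ₗ[ℝ] V)
    (hsa : ∀ v w, B (A v) w = B v (A w))
    (hker : 2 ≤ finrank ℝ (LinearMap.ker A : Submodule ℝ V)) :
    ∃ (S : V →ₗ[ℝ] V) (lam : ℝ), S ≠ 0 ∧ (∀ v w, B (S v) w = - B v (S w)) ∧
      S * A = 0 ∧ A * S = 0 ∧ S * S * S = (-lam) • S := by
  obtain ⟨a, b, ha, hb, hab⟩ := exists_ab A hker
  set S : V →ₗ[ℝ] V := (B a).smulRight b - (B b).smulRight a with hS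
  have hSapp : ∀ v, S v = B a v • b - B b v • a := by
    intro v; simp [hS]
  set lam : ℝ := B a a * B b b - B a b * B a b with hlam
  have hBaA : ∀ v, B a (A v) = 0 := by
    intro v
    rw [← hsa a v, ha]
    simp
  have hBbA : ∀ v, B b (A v) = 0 := by
    intro v
    rw [← hsa b v, hb]
    simp
  refine ⟨S, lam, ?_, ?_, ?_, ?_, ?_⟩
  · -- S ≠ 0
    intro h0
    have hz : ∀ v, B a v • b - B b v • a = 0 := by
      intro v; rw [← hSapp, h0]; rfl
    have haz : ∀ v, B a v = 0 := by
      intro v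
      have := hz v
      have h1 : (- B b v) • a + (B a v) • b = 0 := by
        rw [neg_smul]; rw [sub_eq_add_neg] at this; rw [add_comm] at this; exact this
      exact (hab _ _ h1).2
    have : a = 0 := hnd a haz
    have := (hab 1 0 (by rw [this]; simp)).1
    norm_num at this
  · -- skew-adjoint
    intro v w
    simp only [hSapp, map_sub, map_smul, LinearMap.sub_apply, LinearMap.smul_apply, smul_eq_mul]
    rw [hsymm v b, hsymm v a]
    ring
  · -- S * A = 0
    ext v
    simp [Module.End.mul_apply, hSapp, hBaA, hBbA]
  · -- A * S = 0
    ext v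
    simp [Module.End.mul_apply, hSapp, ha, hb]
  · -- S^3 = -lam • S
    ext v
    simp only [Module.End.mul_apply, LinearMap.smul_apply, hSapp, map_sub, map_smul,
      smul_sub, smul_smul, smul_eq_mul, hlam]
    rw [hsymm b a]
    module


lemma inv_aux {R : Type*} [Ring R] [Algebra ℝ R] (S : R) (lam t : ℝ)
    (hS3 : S*S*S = (-lam) • S) (hd : 1 + t^2*lam ≠ 0) :
    (1 + t • S) * (1 + (-(t/(1+t^2*lam))) • S + (t^2/(1+t^2*lam)) • (S*S)) = 1 ∧
    (1 + (-(t/(1+t^2*lam))) • S + (t^2/(1+t^2*lam)) • (S*S)) * (1 + t • S) = 1 := by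
  have hassoc : S * (S * S) = (-lam) • S := by rw [← mul_assoc, hS3]
  constructor
  · simp only [mul_add, add_mul, one_mul, mul_one, smul_mul_assoc, mul_smul_comm, smul_smul,
      hassoc, hS3]
    match_scalars <;> field_simp <;> ring
  · simp only [mul_add, add_mul, one_mul, mul_one, smul_mul_assoc, mul_smul_comm, smul_smul,
      hassoc, hS3]
    match_scalars <;> field_simp <;> ring

lemma mul_comm_aux {R : Type*} [Ring R] [Algebra ℝ R] (S : R) (t t' : ℝ) :
    (1 + t • S) * (1 + t' • S) = (1 + t' • S) * (1 + t • S) := by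
  simp only [mul_add, add_mul, one_mul, mul_one, smul_mul_assoc, mul_smul_comm, smul_smul]
  match_scalars <;> ring

lemma diff_aux {R : Type*} [Ring R] [Algebra ℝ R] (S : R) (t t' : ℝ) :
    (2*(t'-t)) • S = (1 + (-t) • S) * (1 + t' • S) - (1 + (-t') • S) * (1 + t • S) := by
  simp only [mul_add, add_mul, one_mul, mul_one, smul_mul_assoc, mul_smul_comm, smul_smul]
  match_scalars <;> ring

lemma tau_aux (lam : ℝ) (s : ℝ) :
    1 + (s/((1+|s|)*(1+|lam|)))^2 * lam ≠ 0 := by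
  have hs : (0:ℝ) < 1 + |s| := by positivity
  have hl : (0:ℝ) < 1 + |lam| := by positivity
  have h1 : (s/((1+|s|)*(1+|lam|)))^2 * |lam| < 1 := by
    rw [div_pow, div_mul_eq_mul_div, div_lt_one (by positivity)]
    have hs2 : s^2 ≤ (1+|s|)^2 := by nlinarith [abs_nonneg s, neg_abs_le s, le_abs_self s, sq_abs s]
    nlinarith [abs_nonneg lam, abs_nonneg s, sq_nonneg s, mul_pos (mul_pos hs hs) hl]
  have h2 : -((s/((1+|s|)*(1+|lam|)))^2 * |lam|) ≤ (s/((1+|s|)*(1+|lam|)))^2 * lam := by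
    have := neg_abs_le lam
    nlinarith [sq_nonneg (s/((1+|s|)*(1+|lam|)))]
  nlinarith

lemma tau_inj (c : ℝ) (hc : 0 < c) :
    Function.Injective (fun s : ℝ => s/((1+|s|)*c)) := by
  intro s s' h
  simp only at h
  have hs : (0:ℝ) < 1 + |s| := by positivity
  have hs' : (0:ℝ) < 1 + |s'| := by positivity
  rw [div_eq_div_iff (by positivity) (by positivity)] at h
  have h' : s * (1+|s'|) = s' * (1+|s|) := by
    have := h
    field_simp at this
    nlinarith [this]
  rcases abs_cases s with ⟨h1, h2⟩ | ⟨h1, h2⟩ <;>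
    rcases abs_cases s' with ⟨h3, h4⟩ | ⟨h3, h4⟩ <;>
    rw [h1, h3] at h' <;> nlinarith [h']

lemma one_to_five {V : Type*} [AddCommGroup V] [Module ℝ V] {m : ℕ} (hm : 2 ≤ m)
    (hdim : finrank ℝ V = m)
    (B : V →ₗ[ℝ] V →ₗ[ℝ] ℝ)
    (hsymm : ∀ v w, B v w = B w v)
    (hnd : ∀ v, (∀ w, B v w = 0) → v = 0)
    (A : V →ₗ[ℝ] V)
    (hsa : ∀ v w, B (A v) w = B v (A w))
    (hnil : A ^ m = 0)
    (h1 : A ^ (m-1) ≠ 0)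
    (C : V →ₗ[ℝ] V)
    (hskewS : ∀ v w, B (C v) w = - B v (C w))
    (hcomm : C ∘ₗ A = A ∘ₗ C) :
    C = 0 := by
  haveI : FiniteDimensional ℝ V := FiniteDimensional.of_finrank_pos (by omega)
  haveI : Nontrivial V := Module.nontrivial_of_finrank_pos (R := ℝ) (by omega)
  haveI : Nonempty (Fin m) := ⟨⟨0, by omega⟩⟩
  obtain ⟨v, hv⟩ : ∃ v, (A ^ (m-1)) v ≠ 0 := by
    by_contra h; push_neg at h
    exact h1 (LinearMap.ext fun v => by simpa using h v)
  have hind := iterate_indep m A hnil v hv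
  have hcard : Fintype.card (Fin m) = finrank ℝ V := by rw [Fintype.card_fin, hdim]
  let bas : Basis (Fin m) ℝ V := basisOfLinearIndependentOfCardEqFinrank hind hcard
  have hbas : ∀ i : Fin m, bas i = (A ^ (i:ℕ)) v := fun i =>
    congrFun (coe_basisOfLinearIndependentOfCardEqFinrank hind hcard) i
  set c : Fin m → ℝ := fun i => bas.repr (C v) i with hc
  have hCv : C v = ∑ i : Fin m, c i • (A ^ (i:ℕ)) v := by
    conv_lhs => rw [← bas.sum_repr (C v)]
    exact Finset.sum_congr rfl fun i _ => by rw [hbas]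
  -- C commutes with powers of A
  have hcp : ∀ k : ℕ, ∀ x, C ((A ^ k) x) = (A ^ k) (C x) := by
    intro k
    induction k with
    | zero => simp
    | succ k ih =>
      intro x
      rw [pow_succ, Module.End.mul_apply, Module.End.mul_apply, ih (A x)]
      congr 1
      simpa using LinearMap.congr_fun hcomm x
  -- C is the polynomial P in A
  set P : V →ₗ[ℝ] V := ∑ i : Fin m, c i • A ^ (i:ℕ) with hP
  have hCP : C = P := by
    apply bas.ext
    intro i
    rw [hbas, hcp (i:ℕ) v, hCv, map_sum]
    simp only [hP, LinearMap.sum_apply, LinearMap.smul_apply, map_smul]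
    refine Finset.sum_congr rfl fun j _ => ?_
    rw [← Module.End.mul_apply (A ^ (i:ℕ)), ← Module.End.mul_apply (A ^ (j:ℕ)),
      ← pow_add, ← pow_add, Nat.add_comm]
  -- powers of A are self-adjoint
  have hpowsa : ∀ k : ℕ, ∀ x y, B ((A ^ k) x) y = B x ((A ^ k) y) := by
    intro k
    induction k with
    | zero => simp
    | succ k ih =>
      intro x y
      calc B ((A ^ (k+1)) x) y = B ((A ^ k) (A x)) y := by rw [pow_succ, Module.End.mul_apply]
      _ = B (A x) ((A ^ k) y) := ih _ _
      _ = B x (A ((A ^ k) y)) := hsa _ _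
      _ = B x ((A ^ (k+1)) y) := by
          rw [← Module.End.mul_apply A (A ^ k), ← pow_succ']
  -- C is self-adjoint
  have hCsa : ∀ x y, B (C x) y = B x (C y) := by
    intro x y
    rw [hCP]
    simp only [hP, LinearMap.sum_apply, LinearMap.smul_apply, map_sum, map_smul,
      smul_eq_mul]
    exact Finset.sum_congr rfl fun i _ => by rw [hpowsa i]
  -- conclude
  ext w
  have hz : ∀ u, B (C w) u = 0 := by
    intro u
    have h2 : B u (C w) = B (C u) w := (hCsa u w).symm
    rw [hskewS u w] at h2
    have h3 : B u (C w) = 0 := by linarith [h2]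
    rw [hsymm]
    exact h3
  simp [hnd _ hz]

lemma one_to_three {V : Type*} [AddCommGroup V] [Module ℝ V] {m : ℕ} (hm : 2 ≤ m)
    (hdim : finrank ℝ V = m)
    (B : V →ₗ[ℝ] V →ₗ[ℝ] ℝ)
    (hsymm : ∀ v w, B v w = B w v)
    (hnd : ∀ v, (∀ w, B v w = 0) → v = 0)
    (A : V →ₗ[ℝ] V)
    (hsa : ∀ v w, B (A v) w = B v (A w))
    (hnil : A ^ m = 0)
    (h1 : A ^ (m-1) ≠ 0)
    (C : V →ₗ[ℝ] V) (hbij : Function.Bijective C)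
    (hiso : ∀ v w, B (C v) (C w) = B v w)
    (hcomm : C ∘ₗ A = A ∘ₗ C) :
    C = LinearMap.id ∨ C = - LinearMap.id := by
  haveI : FiniteDimensional ℝ V := FiniteDimensional.of_finrank_pos (by omega)
  haveI : Nontrivial V := Module.nontrivial_of_finrank_pos (R := ℝ) (by omega)
  haveI : Nonempty (Fin m) := ⟨⟨0, by omega⟩⟩
  obtain ⟨v, hv⟩ : ∃ v, (A ^ (m-1)) v ≠ 0 := by
    by_contra h; push_neg at h
    exact h1 (LinearMap.ext fun v => by simpa using h v)
  have hind := iterate_indep m A hnil v hv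
  have hcard : Fintype.card (Fin m) = finrank ℝ V := by rw [Fintype.card_fin, hdim]
  let bas : Basis (Fin m) ℝ V := basisOfLinearIndependentOfCardEqFinrank hind hcard
  have hbas : ∀ i : Fin m, bas i = (A ^ (i:ℕ)) v := fun i =>
    congrFun (coe_basisOfLinearIndependentOfCardEqFinrank hind hcard) i
  set c : Fin m → ℝ := fun i => bas.repr (C v) i with hc
  have hCv : C v = ∑ i : Fin m, c i • (A ^ (i:ℕ)) v := by
    conv_lhs => rw [← bas.sum_repr (C v)]
    exact Finset.sum_congr rfl fun i _ => by rw [hbas]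
  -- C commutes with powers of A
  have hcp : ∀ k : ℕ, ∀ x, C ((A ^ k) x) = (A ^ k) (C x) := by
    intro k
    induction k with
    | zero => simp
    | succ k ih =>
      intro x
      rw [pow_succ, Module.End.mul_apply, Module.End.mul_apply, ih (A x)]
      congr 1
      simpa using LinearMap.congr_fun hcomm x
  -- C is the polynomial P in A
  set P : V →ₗ[ℝ] V := ∑ i : Fin m, c i • A ^ (i:ℕ) with hP
  have hCP : C = P := by
    apply bas.ext
    intro i
    rw [hbas, hcp (i:ℕ) v, hCv, map_sum]
    simp only [hP, LinearMap.sum_apply, LinearMap.smul_apply, map_smul]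
    refine Finset.sum_congr rfl fun j _ => ?_
    rw [← Module.End.mul_apply (A ^ (i:ℕ)), ← Module.End.mul_apply (A ^ (j:ℕ)),
      ← pow_add, ← pow_add, Nat.add_comm]
  -- powers of A are self-adjoint
  have hpowsa : ∀ k : ℕ, ∀ x y, B ((A ^ k) x) y = B x ((A ^ k) y) := by
    intro k
    induction k with
    | zero => simp
    | succ k ih =>
      intro x y
      calc B ((A ^ (k+1)) x) y = B ((A ^ k) (A x)) y := by rw [pow_succ, Module.End.mul_apply]
      _ = B (A x) ((A ^ k) y) := ih _ _
      _ = B x (A ((A ^ k) y)) := hsa _ _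
      _ = B x ((A ^ (k+1)) y) := by
          rw [← Module.End.mul_apply A (A ^ k), ← pow_succ']
  -- C is self-adjoint
  have hCsa : ∀ x y, B (C x) y = B x (C y) := by
    intro x y
    rw [hCP]
    simp only [hP, LinearMap.sum_apply, LinearMap.smul_apply, map_sum, map_smul,
      smul_eq_mul]
    exact Finset.sum_congr rfl fun i _ => by rw [hpowsa i]
  -- C * C = 1
  have hC2 : C * C = 1 := by
    ext y
    have hz : ∀ w, B (C (C y) - y) w = 0 := by
      intro w
      rw [map_sub, LinearMap.sub_apply, hsymm (C (C y)) w, ← hCsa, hiso, hsymm, sub_self]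
    have := hnd _ hz
    rw [sub_eq_zero] at this
    simpa [Module.End.mul_apply] using this
  -- decomposition
  obtain ⟨k, rfl⟩ : ∃ k, m = k + 1 := ⟨m - 1, by omega⟩
  set c₀ : ℝ := c 0 with hc₀
  obtain ⟨N, hCdecomp⟩ : ∃ N : V →ₗ[ℝ] V, C = c₀ • 1 + N := ⟨C - c₀ • 1, by abel⟩
  have hN : N = C - c₀ • 1 := by rw [hCdecomp]; abel
  have hsum : C = c₀ • (1 : V →ₗ[ℝ] V) + ∑ i : Fin k, c i.succ • A ^ ((i:ℕ)+1) := by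
    rw [hCP, hP, Fin.sum_univ_succ]
    simp [Fin.val_succ, hc₀]
  set M : V →ₗ[ℝ] V := ∑ i : Fin k, c i.succ • A ^ (i:ℕ) with hM
  have hNAM : N = A * M := by
    rw [hN, hM, Finset.mul_sum]
    conv_lhs => rw [hsum]
    rw [add_sub_cancel_left]
    refine Finset.sum_congr rfl fun i _ => ?_
    rw [mul_smul_comm, ← pow_succ']
  have hAMcomm : Commute A M := by
    rw [hM]
    refine Commute.sum_right _ _ _ fun i _ => ?_
    exact ((Commute.refl A).pow_right _).smul_right _
  have hNnil : N ^ (k+1) = 0 := by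
    rw [hNAM, hAMcomm.mul_pow, hnil, zero_mul]
  have heq : (c₀*c₀) • (1 : V →ₗ[ℝ] V) + (2*c₀) • N + N * N = 1 := by
    rw [← expand_aux, ← hCdecomp, hC2]
  -- c₀ * c₀ = 1
  have hsq : c₀ * c₀ = 1 := by
    have h2 := aux2 c₀ N heq
    have hcN : Commute N ((2*c₀) • (1 : V →ₗ[ℝ] V) + N) :=
      Commute.add_right (((Commute.one_right N).smul_right _)) (Commute.refl N)
    have h3 : ((c₀*c₀ - 1) • (1 : V →ₗ[ℝ] V)) ^ (k+1) = 0 := by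
      rw [h2, neg_pow, hcN.mul_pow, hNnil, zero_mul, mul_zero]
    rw [smul_pow, one_pow] at h3
    obtain ⟨v0, hv0⟩ := exists_ne (0 : V)
    have h4 := LinearMap.congr_fun h3 v0
    simp only [LinearMap.smul_apply, Module.End.one_apply, LinearMap.zero_apply] at h4
    rcases smul_eq_zero.mp h4 with h | h
    · have := pow_eq_zero_iff (n := k+1) (by omega) |>.mp h
      nlinarith [this]
    · exact absurd h hv0
  have hNN : N * N = (-(2*c₀)) • N := aux3 c₀ N heq hsq
  have hNpow : ∀ j : ℕ, N ^ (j+1) = (-(2*c₀))^j • N := by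
    intro j; induction j with
    | zero => simp
    | succ j ih =>
      rw [pow_succ, ih, smul_mul_assoc, hNN, smul_smul, ← pow_succ]
  have hNzero : N = 0 := by
    have h6 := hNnil
    rw [hNpow k] at h6
    rcases smul_eq_zero.mp h6 with h | h
    · exfalso
      have hc0 : c₀ ≠ 0 := fun hc => by rw [hc] at hsq; norm_num at hsq
      exact pow_ne_zero k (by simpa using hc0) h
    · exact h
  have hCc : C = c₀ • (1 : V →ₗ[ℝ] V) := by rw [hCdecomp, hNzero, add_zero]
  rcases mul_self_eq_one_iff.mp hsq with h | h
  · left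
    rw [hCc, h, one_smul, Module.End.one_eq_id]
  · right
    rw [hCc, h, neg_smul, one_smul, Module.End.one_eq_id]

section
variable {V : Type*} [AddCommGroup V] [Module ℝ V]
lemma infinite_isometries [FiniteDimensional ℝ V]
    (B : V →ₗ[ℝ] V →ₗ[ℝ] ℝ)
    (hsymm : ∀ v w, B v w = B w v)
    (hnd : ∀ v, (∀ w, B v w = 0) → v = 0)
    (A : V →ₗ[ℝ] V)
    (hsa : ∀ v w, B (A v) w = B v (A w))
    (hker : 2 ≤ finrank ℝ (LinearMap.ker A : Submodule ℝ V)) :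
    {C : V →ₗ[ℝ] V | Function.Bijective C ∧ (∀ v w, B (C v) (C w) = B v w) ∧
        C ∘ₗ A = A ∘ₗ C}.Infinite := by
  obtain ⟨S, lam, hSne, hskew, hSA0, hAS0, hS3⟩ := build_S B hsymm hnd A hsa hker
  set Q : ℝ → (V →ₗ[ℝ] V) :=
    fun t => 1 + (-(t/(1+t^2*lam))) • S + (t^2/(1+t^2*lam)) • (S*S) with hQdef
  set Cm : ℝ → (V →ₗ[ℝ] V) := fun t => (1 + (-t) • S) * Q t with hCdef
  set τ : ℝ → ℝ := fun s => s/((1+|s|)*(1+|lam|)) with hτ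
  have hτgood : ∀ s, 1 + (τ s)^2 * lam ≠ 0 := fun s => tau_aux lam s
  have hgoodneg : ∀ t : ℝ, 1 + t^2*lam ≠ 0 → 1 + (-t)^2*lam ≠ 0 := by
    intro t ht; rwa [neg_pow, Even.neg_one_pow ⟨1, rfl⟩, one_mul]
  -- basic identities for good t
  have hQ1 : ∀ t : ℝ, 1 + t^2*lam ≠ 0 → (1 + t • S) * Q t = 1 :=
    fun t ht => (inv_aux S lam t hS3 ht).1
  have hQ2 : ∀ t : ℝ, 1 + t^2*lam ≠ 0 → Q t * (1 + t • S) = 1 :=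
    fun t ht => (inv_aux S lam t hS3 ht).2
  have hCt : ∀ t : ℝ, 1 + t^2*lam ≠ 0 → Cm t * (1 + t • S) = 1 + (-t) • S := by
    intro t ht
    rw [hCdef]
    rw [mul_assoc, hQ2 t ht, mul_one]
  -- membership
  have hmem : ∀ t : ℝ, 1 + t^2*lam ≠ 0 →
      Function.Bijective (Cm t) ∧ (∀ v w, B (Cm t v) (Cm t w) = B v w) ∧
        Cm t ∘ₗ A = A ∘ₗ Cm t := by
    intro t ht
    have htn := hgoodneg t ht
    have hQA : Q t * A = A := by
      rw [hQdef]
      simp only [add_mul, smul_mul_assoc, one_mul, mul_assoc, hSA0, smul_zero, mul_zero,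
        add_zero]
    have hAQ : A * Q t = A := by
      rw [hQdef]
      simp only [mul_add, mul_smul_comm, mul_one, ← mul_assoc, hAS0, smul_zero, zero_mul,
        add_zero]
    refine ⟨?_, ?_, ?_⟩
    · -- bijective
      set D : V →ₗ[ℝ] V := (1 + t • S) * Q (-t) with hD
      have hCD : Cm t * D = 1 := by
        rw [hCdef, hD, mul_assoc, ← mul_assoc (Q t), hQ2 t ht, one_mul, hQ1 (-t) htn]
      have hDC : D * Cm t = 1 := by
        rw [hCdef, hD, mul_assoc, ← mul_assoc (Q (-t)), hQ2 (-t) htn, one_mul, hQ1 t ht]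
      refine Function.bijective_iff_has_inverse.mpr ⟨D, ?_, ?_⟩
      · intro x
        have := LinearMap.congr_fun hDC x
        simpa [Module.End.mul_apply] using this
      · intro x
        have := LinearMap.congr_fun hCD x
        simpa [Module.End.mul_apply] using this
    · -- isometry
      intro v w
      have hv : (1 + t • S) (Q t v) = v := by
        have := LinearMap.congr_fun (hQ1 t ht) v
        simpa [Module.End.mul_apply] using this
      have hw : (1 + t • S) (Q t w) = w := by
        have := LinearMap.congr_fun (hQ1 t ht) w
        simpa [Module.End.mul_apply] using this
      have hCv : Cm t v = (1 + (-t) • S) (Q t v) := by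
        rw [hCdef]; simp [Module.End.mul_apply]
      have hCw : Cm t w = (1 + (-t) • S) (Q t w) := by
        rw [hCdef]; simp [Module.End.mul_apply]
      set x := Q t v
      set y := Q t w
      rw [hCv, hCw, ← hv, ← hw]
      simp only [LinearMap.add_apply, Module.End.one_apply, LinearMap.smul_apply,
        map_add, map_smul, LinearMap.add_apply, smul_eq_mul, neg_smul, map_neg,
        LinearMap.neg_apply]
      have hs := hskew x y
      linear_combination (-2*t) * hs
    · -- commutes with A
      rw [← Module.End.mul_eq_comp, ← Module.End.mul_eq_comp]
      rw [hCdef]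
      rw [mul_assoc, hQA, ← mul_assoc, mul_add A 1 ((-t) • S), mul_one, mul_smul_comm, hAS0, smul_zero,
        add_zero, hAQ, add_mul, one_mul, smul_mul_assoc, hSA0, smul_zero, add_zero]
  -- injectivity
  have hinj : Function.Injective (fun s => Cm (τ s)) := by
    intro s s' h
    simp only at h
    have ht := hτgood s
    have ht' := hτgood s'
    have key : (1 + (-(τ s)) • S) * (1 + (τ s') • S)
        = (1 + (-(τ s')) • S) * (1 + (τ s) • S) := by
      calc (1 + (-(τ s)) • S) * (1 + (τ s') • S)
          = (Cm (τ s) * (1 + (τ s) • S)) * (1 + (τ s') • S) := by rw [hCt _ ht]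
        _ = Cm (τ s) * ((1 + (τ s) • S) * (1 + (τ s') • S)) := mul_assoc _ _ _
        _ = Cm (τ s') * ((1 + (τ s') • S) * (1 + (τ s) • S)) := by
            rw [h, mul_comm_aux]
        _ = (Cm (τ s') * (1 + (τ s') • S)) * (1 + (τ s) • S) := (mul_assoc _ _ _).symm
        _ = (1 + (-(τ s')) • S) * (1 + (τ s) • S) := by rw [hCt _ ht']
    have hz : (2*(τ s' - τ s)) • S = 0 := by
      rw [diff_aux S (τ s) (τ s'), key, sub_self]
    rcases smul_eq_zero.mp hz with h0 | h0
    · have : τ s = τ s' := by linarith [h0]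
      exact tau_inj (1+|lam|) (by positivity) this
    · exact absurd h0 hSne
  exact Set.infinite_of_injective_forall_mem hinj (fun s => hmem (τ s) (hτgood s))

end

/-- For a nilpotent self-adjoint endomorphism `A` of an `m`-dimensional
pseudo-Euclidean space `(V, B)`, the following are equivalent:
(i) `A^(m-1) ≠ 0`; (ii) `rank A = m - 1`; (iii) `±Id` are the only linear isometries
commuting with `A`; (iv) `A` commutes with only finitely many linear isometries;
(v) `0` is the only skew-adjoint endomorphism commuting with `A`. -/
theorem generic_nilpotent_tfae
    (V : Type*) [AddCommGroup V] [Module ℝ V]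
    (m : ℕ) (hm : 2 ≤ m) (hdim : finrank ℝ V = m)
    (B : V →ₗ[ℝ] V →ₗ[ℝ] ℝ)
    (hsymm : ∀ v w, B v w = B w v)
    (hnd : ∀ v, (∀ w, B v w = 0) → v = 0)
    (A : V →ₗ[ℝ] V)
    (hsa : ∀ v w, B (A v) w = B v (A w))
    (hnil : A ^ m = 0) :
    [ A ^ (m - 1) ≠ 0,
      finrank ℝ (LinearMap.range A) = m - 1,
      ∀ C : V →ₗ[ℝ] V, Function.Bijective C → (∀ v w, B (C v) (C w) = B v w) →
        C ∘ₗ A = A ∘ₗ C → C = LinearMap.id ∨ C = - LinearMap.id,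
      {C : V →ₗ[ℝ] V | Function.Bijective C ∧ (∀ v w, B (C v) (C w) = B v w) ∧
        C ∘ₗ A = A ∘ₗ C}.Finite,
      ∀ S : V →ₗ[ℝ] V, (∀ v w, B (S v) w = - B v (S w)) → S ∘ₗ A = A ∘ₗ S → S = 0
    ].TFAE := by
  haveI : FiniteDimensional ℝ V := FiniteDimensional.of_finrank_pos (by omega)
  have hker2 : finrank ℝ (LinearMap.range A) ≠ m - 1 →
      2 ≤ finrank ℝ (LinearMap.ker A : Submodule ℝ V) := by
    intro h2
    have hrn := LinearMap.finrank_range_add_finrank_ker A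
    rw [hdim] at hrn
    have hk1 := ker_dim_one hm hdim A hnil
    omega
  tfae_have 1 → 2 := rank_of_pow hm hdim A hnil
  tfae_have 2 → 1 := pow_of_rank hm hdim A hnil
  tfae_have 1 → 3 := fun h1 C hb hi hc =>
    one_to_three hm hdim B hsymm hnd A hsa hnil h1 C hb hi hc
  tfae_have 3 → 4 := by
    intro h3
    apply Set.Finite.subset (Set.Finite.insert LinearMap.id
      (Set.finite_singleton (- LinearMap.id)))
    rintro C ⟨hb, hi, hc⟩
    rcases h3 C hb hi hc with h | h
    · exact Set.mem_insert_iff.mpr (Or.inl h)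
    · exact Set.mem_insert_iff.mpr (Or.inr (Set.mem_singleton_iff.mpr h))
  tfae_have 4 → 2 := by
    intro h4
    by_contra h2
    exact (infinite_isometries B hsymm hnd A hsa (hker2 h2)) h4
  tfae_have 1 → 5 := fun h1 S hsk hc =>
    one_to_five hm hdim B hsymm hnd A hsa hnil h1 S hsk hc
  tfae_have 5 → 2 := by
    intro h5
    by_contra h2
    obtain ⟨S, lam, hSne, hskew, hSA0, hAS0, hS3⟩ :=
      build_S B hsymm hnd A hsa (hker2 h2)
    refine hSne (h5 S hskew ?_)
    rw [← Module.End.mul_eq_comp, ← Module.End.mul_eq_comp, hSA0, hAS0]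
  tfae_finish
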